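/- (Bayesian Cramér–Rao inequality) Let X be a finite set, Θ ⊆ ℝ^k open, θ ↦ p_θ a continuously differentiable family of strictly positive probability distributions on X, and λ a continuously differentiable, strictly positive probability density on Θ. Define the Fisher matrix G^{(e)}(θ) with entries E_{p_θ}[∂_i log p_θ(X) ∂_j log p_θ(X)] and J^λ(θ) with entries ∂_i log λ(θ) · ∂_j log λ(θ). Let θ̂ : X → ℝ^k be an unbiased estimator, i.e. E_{p_θ}[θ̂] = θ for all θ ∈ Θ. Assume G^{(e)}(θ) + J^λ(θ) is positive definite for all θ and that all the matrix-valued integrals below exist (entrywise Lebesgue integrals over Θ). Then ∫_Θ λ(θ) Cov_{p_θ}[θ̂] dθ ≽ ( ∫_Θ λ(θ) [G^{(e)}(θ) + J^λ(θ)] dθ )^{-1}. -/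

import Mathlib

open scoped BigOperators Topology Matrix
open Real MeasureTheory

noncomputable section

/-- Expectation of `A` under the weight/distribution `p` on a finite set. -/
def expct {X : Type*} [Fintype X] (p A : X → ℝ) : ℝ := ∑ x, p x * A x

/-- Covariance of `A` and `B` under `p`. -/
def covf {X : Type*} [Fintype X] (p A B : X → ℝ) : ℝ :=
  (∑ x, p x * A x * B x) - (∑ x, p x * A x) * (∑ x, p x * B x)

/-- Variance of `A` under `p`: `E_p[(A - E_p A)^2]`. -/
def varE {X : Type*} [Fintype X] (p A : X → ℝ) : ℝ :=
  ∑ x, p x * (A x - expct p A) ^ 2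

/-- The α-escort distribution of `p`. -/
def escort {X : Type*} [Fintype X] (α : ℝ) (p : X → ℝ) : X → ℝ :=
  fun x => p x ^ α / ∑ y, p y ^ α

/-- Partial derivative in the `i`-th coordinate direction. -/
def pderiv {m : ℕ} (i : Fin m) (f : (Fin m → ℝ) → ℝ) (θ : Fin m → ℝ) : ℝ :=
  fderiv ℝ f θ (Pi.single i 1)

/-- Covariance matrix of a vector-valued map `A` under `p`. -/
def covMatrix {X : Type*} [Fintype X] {m : ℕ} (p : X → ℝ) (A : X → Fin m → ℝ) :
    Matrix (Fin m) (Fin m) ℝ :=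
  Matrix.of fun i j => covf p (fun x => A x i) (fun x => A x j)

/-- The α-information matrix `G^{(α)}(θ)`. -/
def Galpha {X : Type*} [Fintype X] {m : ℕ} (α : ℝ) (p : (Fin m → ℝ) → X → ℝ)
    (θ : Fin m → ℝ) : Matrix (Fin m) (Fin m) ℝ :=
  Matrix.of fun i j =>
    covf (escort α (p θ)) (fun x => pderiv i (fun t => Real.log (p t x)) θ)
      (fun x => pderiv j (fun t => Real.log (p t x)) θ)

/-- The I_α-divergence (relative α-entropy). -/
def Ialpha {X : Type*} [Fintype X] (α : ℝ) (p q : X → ℝ) : ℝ :=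
  (1 / (1 - α)) * Real.log (∑ x, p x * q x ^ (α - 1))
    + (1 / α) * Real.log (∑ x, q x ^ α)
    - (1 / (α * (1 - α))) * Real.log (∑ x, p x ^ α)

/-- Generalized KL-divergence between positive measures on a finite set. -/
def genKL {X : Type*} [Fintype X] (pt qt : X → ℝ) : ℝ :=
  ∑ x, pt x * Real.log (pt x / qt x) - ∑ x, pt x + ∑ x, qt x

/-- The Fisher information matrix `G^{(e)}(θ)`. -/
def GeMat {X : Type*} [Fintype X] {k : ℕ} (p : (Fin k → ℝ) → X → ℝ) (θ : Fin k → ℝ) :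
    Matrix (Fin k) (Fin k) ℝ :=
  Matrix.of fun i j =>
    ∑ x, p θ x * pderiv i (fun t => Real.log (p t x)) θ * pderiv j (fun t => Real.log (p t x)) θ

/-- The prior matrix `J^λ(θ)` with entries `∂_i log λ · ∂_j log λ`. -/
def Jmat {k : ℕ} (lam : (Fin k → ℝ) → ℝ) (θ : Fin k → ℝ) : Matrix (Fin k) (Fin k) ℝ :=
  Matrix.of fun i j =>
    pderiv i (fun t => Real.log (lam t)) θ * pderiv j (fun t => Real.log (lam t)) θ

/-- The generalized Fisher matrix `G^{(f,F)}(θ)` of the escort model. -/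
def GFF {X : Type*} [Fintype X] {k : ℕ} (F : ℝ → ℝ) (p : (Fin k → ℝ) → X → ℝ)
    (θ : Fin k → ℝ) : Matrix (Fin k) (Fin k) ℝ :=
  Matrix.of fun i j =>
    ∑ x, F (p θ x) * pderiv i (fun t => Real.log (F (p t x))) θ
      * pderiv j (fun t => Real.log (F (p t x))) θ

/-- The generalized f-divergence `D_f^{(F)}(p,q)`. -/
def genDiv {X : Type*} [Fintype X] (f F : ℝ → ℝ) (p q : X → ℝ) : ℝ :=
  (1 / deriv (deriv f) 1) * ∑ x, F (q x) * f (F (p x) / F (q x))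

/-- The Bayesian I_α-divergence between `λ·p` and `μ·q`. -/
def IalphaB {X : Type*} [Fintype X] (α lam mu : ℝ) (p q : X → ℝ) : ℝ :=
  lam * Ialpha α p q + lam * Real.log (lam / mu) - lam + mu

/-- The open-simplex parametrization of distributions on a set with `d+1` points. -/
def simplexFam (d : ℕ) (θ : Fin d → ℝ) : Fin (d + 1) → ℝ :=
  fun x => if h : (x : ℕ) < d then θ ⟨x, h⟩ else 1 - ∑ i, θ i


/-- Auxiliary: bilinear expansion of a weighted product of two linear combinations. -/
lemma sum_prod' {X : Type*} [Fintype X] {k : ℕ} (q : X → ℝ) (f g : Fin k → X → ℝ) (a c : Fin k → ℝ) :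
    ∑ x, q x * ((∑ i, a i * f i x) * (∑ j, c j * g j x))
      = ∑ i, ∑ j, a i * c j * ∑ x, q x * (f i x * g j x) := by
  have h : ∀ x, q x * ((∑ i, a i * f i x) * (∑ j, c j * g j x))
      = ∑ i, ∑ j, a i * c j * (q x * (f i x * g j x)) := by
    intro x
    rw [Finset.sum_mul_sum, Finset.mul_sum]
    refine Finset.sum_congr rfl fun i _ => ?_
    rw [Finset.mul_sum]
    exact Finset.sum_congr rfl fun j _ => by ring
  simp only [h]
  rw [Finset.sum_comm]
  refine Finset.sum_congr rfl fun i _ => ?_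
  rw [Finset.sum_comm]
  exact Finset.sum_congr rfl fun j _ => (Finset.mul_sum _ _ _).symm

/-- Auxiliary: the completed-square expansion used in the Cramér–Rao argument. -/
lemma key_alg {X : Type*} [Fintype X] {k : ℕ} (q : X → ℝ) (e : X → Fin k → ℝ)
    (d : Fin k → X → ℝ) (L θv a c : Fin k → ℝ)
    (M1 : ∑ x, q x = 1)
    (M2 : ∀ i, ∑ x, q x * e x i = θv i)
    (M3 : ∀ j, ∑ x, q x * d j x = 0)
    (M4 : ∀ i j, ∑ x, q x * e x i * d j x = if i = j then 1 else 0) :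
    ∑ x, q x * ((∑ i, a i * (e x i - θv i)) - ∑ j, c j * (d j x + L j)) ^ 2
      = ((∑ i, ∑ j, a i * a j * ((∑ x, q x * e x i * e x j) - θv i * θv j))
        - 2 * (∑ i, a i * c i))
        + ∑ i, ∑ j, c i * c j * ((∑ x, q x * d i x * d j x) + L i * L j) := by
  have P1 : ∀ i j : Fin k, (∑ x, q x * ((e x i - θv i) * (e x j - θv j)))
      = (∑ x, q x * e x i * e x j) - θv i * θv j := by
    intro i j
    have h : ∀ x, q x * ((e x i - θv i) * (e x j - θv j))
        = q x * e x i * e x j - θv j * (q x * e x i) - θv i * (q x * e x j)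
          + θv i * θv j * q x := fun x => by ring
    simp only [h]
    rw [Finset.sum_add_distrib, Finset.sum_sub_distrib, Finset.sum_sub_distrib,
      ← Finset.mul_sum, ← Finset.mul_sum, ← Finset.mul_sum, M1, M2 i, M2 j]
    ring
  have P2 : ∀ i j : Fin k, (∑ x, q x * ((e x i - θv i) * (d j x + L j)))
      = if i = j then 1 else 0 := by
    intro i j
    have h : ∀ x, q x * ((e x i - θv i) * (d j x + L j))
        = q x * e x i * d j x - θv i * (q x * d j x) + L j * (q x * e x i)
          - θv i * L j * q x := fun x => by ring
    simp only [h]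
    rw [Finset.sum_sub_distrib, Finset.sum_add_distrib, Finset.sum_sub_distrib,
      ← Finset.mul_sum, ← Finset.mul_sum, ← Finset.mul_sum, M1, M2 i, M3 j, M4 i j]
    ring
  have P3 : ∀ i j : Fin k, (∑ x, q x * ((d i x + L i) * (d j x + L j)))
      = (∑ x, q x * d i x * d j x) + L i * L j := by
    intro i j
    have h : ∀ x, q x * ((d i x + L i) * (d j x + L j))
        = q x * d i x * d j x + L j * (q x * d i x) + L i * (q x * d j x)
          + L i * L j * q x := fun x => by ring
    simp only [h]
    rw [Finset.sum_add_distrib, Finset.sum_add_distrib, Finset.sum_add_distrib,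
      ← Finset.mul_sum, ← Finset.mul_sum, ← Finset.mul_sum, M1, M3 i, M3 j]
    ring
  have expand : ∀ x, q x * ((∑ i, a i * (e x i - θv i)) - ∑ j, c j * (d j x + L j)) ^ 2
      = q x * ((∑ i, a i * (e x i - θv i)) * (∑ j, a j * (e x j - θv j)))
        - 2 * (q x * ((∑ i, a i * (e x i - θv i)) * (∑ j, c j * (d j x + L j))))
        + q x * ((∑ i, c i * (d i x + L i)) * (∑ j, c j * (d j x + L j))) := fun x => by ring
  simp only [expand]
  rw [Finset.sum_add_distrib, Finset.sum_sub_distrib, ← Finset.mul_sum,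
    sum_prod' q (fun i x => e x i - θv i) (fun j x => e x j - θv j) a a,
    sum_prod' q (fun i x => e x i - θv i) (fun j x => d j x + L j) a c,
    sum_prod' q (fun i x => d i x + L i) (fun j x => d j x + L j) c c]
  simp only [P1, P2, P3]
  congr 2
  simp [mul_ite, Finset.sum_ite_eq, Finset.mem_univ]

/-- Auxiliary: the score has zero mean and unit cross-moment with an unbiased estimator. -/
lemma moments {X : Type*} [Fintype X] {k : ℕ}
    (Θ : Set (Fin k → ℝ)) (hΘ : IsOpen Θ)
    (p : (Fin k → ℝ) → X → ℝ)
    (hsmooth : ∀ x, ContDiffOn ℝ 1 (fun θ => p θ x) Θ)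
    (hpos : ∀ θ ∈ Θ, ∀ x, 0 < p θ x)
    (hsum : ∀ θ ∈ Θ, ∑ x, p θ x = 1)
    (est : X → Fin k → ℝ)
    (hunb : ∀ θ ∈ Θ, ∀ i, ∑ x, p θ x * est x i = θ i)
    (θ : Fin k → ℝ) (hθ : θ ∈ Θ) :
    (∀ j, ∑ x, p θ x * pderiv j (fun t => Real.log (p t x)) θ = 0)
    ∧ (∀ i j, ∑ x, p θ x * est x i * pderiv j (fun t => Real.log (p t x)) θ
        = if i = j then 1 else 0) := by
  have hdiff : ∀ x, DifferentiableAt ℝ (fun t => p t x) θ := fun x =>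
    ((hsmooth x).differentiableOn one_ne_zero).differentiableAt (hΘ.mem_nhds hθ)
  set D : X → (Fin k → ℝ) →L[ℝ] ℝ := fun x => fderiv ℝ (fun t => p t x) θ with hD
  have hlog : ∀ x j, pderiv j (fun t => Real.log (p t x)) θ
      = (p θ x)⁻¹ * D x (Pi.single j 1) := by
    intro x j
    have h := ((hdiff x).hasFDerivAt).log (ne_of_gt (hpos θ hθ x))
    unfold pderiv
    rw [h.fderiv]
    simp
    exact Or.inl rfl
  have hsum0 : ∀ j, ∑ x, D x (Pi.single j 1) = 0 := by
    intro j
    have hA : HasFDerivAt (fun t => ∑ x, p t x) (∑ x, D x) θ :=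
      HasFDerivAt.fun_sum (fun x _ => (hdiff x).hasFDerivAt)
    have hev : (fun t => ∑ x, p t x) =ᶠ[nhds θ] fun _ => (1:ℝ) :=
      Filter.eventually_of_mem (hΘ.mem_nhds hθ) (fun t ht => hsum t ht)
    have h0 : (∑ x, D x) = 0 := by
      rw [← hA.fderiv, hev.fderiv_eq, fderiv_fun_const]
      rfl
    calc ∑ x, D x (Pi.single j 1) = (∑ x, D x) (Pi.single j 1) :=
          (ContinuousLinearMap.sum_apply _ _ _).symm
      _ = 0 := by rw [h0]; rfl
  have hsum1 : ∀ i j, ∑ x, est x i * D x (Pi.single j 1) = if i = j then 1 else 0 := by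
    intro i j
    have hA : HasFDerivAt (fun t => ∑ x, p t x * est x i) (∑ x, est x i • D x) θ :=
      HasFDerivAt.fun_sum (fun x _ => ((hdiff x).hasFDerivAt).mul_const (est x i))
    have hev : (fun t => ∑ x, p t x * est x i) =ᶠ[nhds θ] fun t => t i :=
      Filter.eventually_of_mem (hΘ.mem_nhds hθ) (fun t ht => hunb t ht i)
    have hproj : fderiv ℝ (fun t : Fin k → ℝ => t i) θ
        = ContinuousLinearMap.proj (R := ℝ) (φ := fun _ : Fin k => ℝ) i := by
      have hc : (fun t : Fin k → ℝ => t i)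
          = ⇑(ContinuousLinearMap.proj (R := ℝ) (φ := fun _ : Fin k => ℝ) i) := rfl
      rw [hc, ContinuousLinearMap.fderiv]
    have h0 : (∑ x, est x i • D x)
        = ContinuousLinearMap.proj (R := ℝ) (φ := fun _ : Fin k => ℝ) i := by
      rw [← hA.fderiv, hev.fderiv_eq, hproj]
    have := congrArg (fun (L : (Fin k → ℝ) →L[ℝ] ℝ) => L (Pi.single j 1)) h0
    simp only [ContinuousLinearMap.sum_apply, ContinuousLinearMap.smul_apply,
      smul_eq_mul, ContinuousLinearMap.proj_apply] at this
    rw [this, Pi.single_apply]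
  constructor
  · intro j
    have hpt : ∀ x, p θ x * pderiv j (fun t => Real.log (p t x)) θ = D x (Pi.single j 1) := by
      intro x
      rw [hlog x j, ← mul_assoc, mul_inv_cancel₀ (ne_of_gt (hpos θ hθ x)), one_mul]
    simp only [hpt]
    exact hsum0 j
  · intro i j
    have hpt : ∀ x, p θ x * est x i * pderiv j (fun t => Real.log (p t x)) θ
        = est x i * D x (Pi.single j 1) := by
      intro x
      rw [hlog x j, show p θ x * est x i * ((p θ x)⁻¹ * D x (Pi.single j 1))
          = est x i * D x (Pi.single j 1) * (p θ x * (p θ x)⁻¹) from by ring,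
        mul_inv_cancel₀ (ne_of_gt (hpos θ hθ x)), mul_one]
    simp only [hpt]
    exact hsum1 i j

/-- the Bayesian Cramér–Rao inequality. -/
theorem bayesian_cramer_rao {X : Type*} [Fintype X] {k : ℕ}
    (Θ : Set (Fin k → ℝ)) (hΘ : IsOpen Θ)
    (p : (Fin k → ℝ) → X → ℝ)
    (hsmooth : ∀ x, ContDiffOn ℝ 1 (fun θ => p θ x) Θ)
    (hpos : ∀ θ ∈ Θ, ∀ x, 0 < p θ x)
    (hsum : ∀ θ ∈ Θ, ∑ x, p θ x = 1)
    (lam : (Fin k → ℝ) → ℝ) (hlams : ContDiffOn ℝ 1 lam Θ)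
    (hlampos : ∀ θ ∈ Θ, 0 < lam θ)
    (hlamint : (∫ θ in Θ, lam θ) = 1)
    (est : X → Fin k → ℝ)
    (hunb : ∀ θ ∈ Θ, ∀ i, expct (p θ) (fun x => est x i) = θ i)
    (hPD : ∀ θ ∈ Θ, (GeMat p θ + Jmat lam θ).PosDef)
    (hint1 : ∀ i j, IntegrableOn (fun θ => lam θ * covMatrix (p θ) est i j) Θ)
    (hint2 : ∀ i j, IntegrableOn (fun θ => lam θ * (GeMat p θ + Jmat lam θ) i j) Θ) :
    ((Matrix.of fun i j => ∫ θ in Θ, lam θ * covMatrix (p θ) est i j)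
      - (Matrix.of fun i j =>
          ∫ θ in Θ, lam θ * (GeMat p θ + Jmat lam θ) i j)⁻¹).PosSemidef := by
    classical
  have hunb' : ∀ θ ∈ Θ, ∀ i, ∑ x, p θ x * est x i = θ i := by
    intro θ hθ i; simpa [expct] using hunb θ hθ i
  have hlamInt : IntegrableOn lam Θ := by
    by_contra h
    rw [MeasureTheory.integral_undef h] at hlamint
    norm_num at hlamint
  have covf_symm : ∀ (q A B : X → ℝ), covf q A B = covf q B A := by
    intro q A B
    unfold covf
    rw [show (∑ x, q x * A x * B x) = ∑ x, q x * B x * A x from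
      Finset.sum_congr rfl fun x _ => by ring, mul_comm (∑ x, q x * A x)]
  have hVsym : ∀ i j : Fin k, (∫ θ in Θ, lam θ * covMatrix (p θ) est i j)
      = ∫ θ in Θ, lam θ * covMatrix (p θ) est j i := by
    intro i j
    have h : (fun θ => lam θ * covMatrix (p θ) est i j)
        = fun θ => lam θ * covMatrix (p θ) est j i := by
      funext θ
      simp only [covMatrix, Matrix.of_apply]
      rw [covf_symm]
    rw [h]
  have hBsym : ∀ i j : Fin k, (∫ θ in Θ, lam θ * (GeMat p θ + Jmat lam θ) i j)
      = ∫ θ in Θ, lam θ * (GeMat p θ + Jmat lam θ) j i := by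
    intro i j
    have h : (fun θ => lam θ * (GeMat p θ + Jmat lam θ) i j)
        = fun θ => lam θ * (GeMat p θ + Jmat lam θ) j i := by
      funext θ
      simp only [Matrix.add_apply, GeMat, Jmat, Matrix.of_apply]
      rw [show (∑ x, p θ x * pderiv i (fun t => Real.log (p t x)) θ
            * pderiv j (fun t => Real.log (p t x)) θ)
          = ∑ x, p θ x * pderiv j (fun t => Real.log (p t x)) θ
            * pderiv i (fun t => Real.log (p t x)) θ from
          Finset.sum_congr rfl fun x _ => by ring,
        mul_comm (pderiv i (fun t => Real.log (lam t)) θ)]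
    rw [h]
  set Vm := (Matrix.of fun i j => ∫ θ in Θ, lam θ * covMatrix (p θ) est i j :
    Matrix (Fin k) (Fin k) ℝ) with hVm
  set Bm := (Matrix.of fun i j => ∫ θ in Θ, lam θ * (GeMat p θ + Jmat lam θ) i j :
    Matrix (Fin k) (Fin k) ℝ) with hBm
  have hVHerm : Vm.IsHermitian := Matrix.ext fun i j => by
    simp only [Matrix.conjTranspose_apply, star_trivial, hVm, Matrix.of_apply]
    exact hVsym j i
  have hBHerm : Bm.IsHermitian := Matrix.ext fun i j => by
    simp only [Matrix.conjTranspose_apply, star_trivial, hBm, Matrix.of_apply]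
    exact hBsym j i
  have hBinvHerm : (Bm⁻¹).IsHermitian := by
    show Bm⁻¹ᴴ = Bm⁻¹
    rw [Matrix.conjTranspose_nonsing_inv, hBHerm.eq]
  refine Matrix.PosSemidef.of_dotProduct_mulVec_nonneg (hVHerm.sub hBinvHerm) ?_
  intro a
  set c := Bm⁻¹ *ᵥ a with hc
  have hdot : ∀ (M : Matrix (Fin k) (Fin k) ℝ) (u v : Fin k → ℝ),
      u ⬝ᵥ M *ᵥ v = ∑ i, ∑ j, u i * v j * M i j := by
    intro M u v
    simp only [Matrix.mulVec, dotProduct, Finset.mul_sum]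
    exact Finset.sum_congr rfl fun i _ => Finset.sum_congr rfl fun j _ => by ring
  have keyθ : ∀ θ ∈ Θ, (∑ x, p θ x * ((∑ i, a i * (est x i - θ i))
        - ∑ j, c j * (pderiv j (fun t => Real.log (p t x)) θ
            + pderiv j (fun t => Real.log (lam t)) θ)) ^ 2)
      = ((∑ i, ∑ j, a i * a j * covMatrix (p θ) est i j) - 2 * (∑ i, a i * c i))
        + ∑ i, ∑ j, c i * c j * (GeMat p θ + Jmat lam θ) i j := by
    intro θ hθ
    obtain ⟨M3, M4⟩ := moments Θ hΘ p hsmooth hpos hsum est hunb' θ hθ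
    have h := key_alg (p θ) est
      (fun j x => pderiv j (fun t => Real.log (p t x)) θ)
      (fun j => pderiv j (fun t => Real.log (lam t)) θ)
      θ a c (hsum θ hθ) (hunb' θ hθ) M3 M4
    rw [h]
    congr 1
    · congr 1
      refine Finset.sum_congr rfl fun i _ => Finset.sum_congr rfl fun j _ => ?_
      congr 1
      simp only [covMatrix, Matrix.of_apply, covf]
      rw [hunb' θ hθ i, hunb' θ hθ j]
  have key2 : Set.EqOn
      (fun θ => lam θ * ∑ x, p θ x * ((∑ i, a i * (est x i - θ i))
        - ∑ j, c j * (pderiv j (fun t => Real.log (p t x)) θ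
            + pderiv j (fun t => Real.log (lam t)) θ)) ^ 2)
      (fun θ => ((∑ i, ∑ j, a i * a j * (lam θ * covMatrix (p θ) est i j))
        - 2 * (∑ i, a i * c i) * lam θ)
        + ∑ i, ∑ j, c i * c j * (lam θ * (GeMat p θ + Jmat lam θ) i j)) Θ := by
    intro θ hθ
    dsimp only
    rw [keyθ θ hθ, mul_add, mul_sub]
    congr 1
    · congr 1
      · rw [Finset.mul_sum]
        refine Finset.sum_congr rfl fun i _ => ?_
        rw [Finset.mul_sum]
        exact Finset.sum_congr rfl fun j _ => by ring
      · ring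
    · rw [Finset.mul_sum]
      refine Finset.sum_congr rfl fun i _ => ?_
      rw [Finset.mul_sum]
      exact Finset.sum_congr rfl fun j _ => by ring
  have hI1 : Integrable (fun θ => ∑ i, ∑ j, a i * a j * (lam θ * covMatrix (p θ) est i j))
      (volume.restrict Θ) :=
    integrable_finset_sum _ fun i _ => integrable_finset_sum _ fun j _ =>
      (hint1 i j).const_mul _
  have hI2 : Integrable (fun θ => 2 * (∑ i, a i * c i) * lam θ) (volume.restrict Θ) :=
    hlamInt.const_mul _
  have hI3 : Integrable (fun θ => ∑ i, ∑ j, c i * c j * (lam θ * (GeMat p θ + Jmat lam θ) i j))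
      (volume.restrict Θ) :=
    integrable_finset_sum _ fun i _ => integrable_finset_sum _ fun j _ =>
      (hint2 i j).const_mul _
  have int_dsum : ∀ (f : Fin k → Fin k → (Fin k → ℝ) → ℝ),
      (∀ i j, Integrable (f i j) (volume.restrict Θ)) →
      (∫ θ in Θ, ∑ i, ∑ j, f i j θ) = ∑ i, ∑ j, ∫ θ in Θ, f i j θ := by
    intro f hf
    rw [integral_finset_sum _ (fun i _ => integrable_finset_sum _ fun j _ => hf i j)]
    exact Finset.sum_congr rfl fun i _ => integral_finset_sum _ (fun j _ => hf i j)
  have hQ : 0 ≤ ((∑ i, ∑ j, a i * a j * Vm i j) - 2 * (∑ i, a i * c i))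
      + ∑ i, ∑ j, c i * c j * Bm i j := by
    have h0 : 0 ≤ ∫ θ in Θ, lam θ * ∑ x, p θ x * ((∑ i, a i * (est x i - θ i))
        - ∑ j, c j * (pderiv j (fun t => Real.log (p t x)) θ
            + pderiv j (fun t => Real.log (lam t)) θ)) ^ 2 :=
      setIntegral_nonneg hΘ.measurableSet fun θ hθ =>
        mul_nonneg (hlampos θ hθ).le (Finset.sum_nonneg fun x _ =>
          mul_nonneg (hpos θ hθ x).le (sq_nonneg _))
    rw [setIntegral_congr_fun hΘ.measurableSet key2] at h0
    have hI12 : Integrable (fun θ => (∑ i, ∑ j, a i * a j * (lam θ * covMatrix (p θ) est i j))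
        - 2 * (∑ i, a i * c i) * lam θ) (volume.restrict Θ) := hI1.sub hI2
    rw [integral_add hI12 hI3, integral_sub hI1 hI2,
      int_dsum _ (fun i j => (hint1 i j).const_mul _),
      int_dsum _ (fun i j => (hint2 i j).const_mul _)] at h0
    have e1 : ∀ i j : Fin k, (∫ θ in Θ, a i * a j * (lam θ * covMatrix (p θ) est i j))
        = a i * a j * Vm i j := by
      intro i j
      rw [MeasureTheory.integral_const_mul, hVm]
      rfl
    have e2 : (∫ θ in Θ, 2 * (∑ i, a i * c i) * lam θ) = 2 * (∑ i, a i * c i) := by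
      rw [MeasureTheory.integral_const_mul, hlamint, mul_one]
    have e3 : ∀ i j : Fin k, (∫ θ in Θ, c i * c j * (lam θ * (GeMat p θ + Jmat lam θ) i j))
        = c i * c j * Bm i j := by
      intro i j
      rw [MeasureTheory.integral_const_mul, hBm]
      rfl
    simp only [e1, e2, e3] at h0
    exact h0
  show (0:ℝ) ≤ a ⬝ᵥ (Vm - Bm⁻¹) *ᵥ a
  rw [Matrix.sub_mulVec, dotProduct_sub]
  have hVq : ∑ i, ∑ j, a i * a j * Vm i j = a ⬝ᵥ Vm *ᵥ a := (hdot Vm a a).symm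
  by_cases hu : IsUnit Bm.det
  · have hBc : Bm *ᵥ c = a := by
      rw [hc, Matrix.mulVec_mulVec, Matrix.mul_nonsing_inv _ hu, Matrix.one_mulVec]
    have hBq : ∑ i, ∑ j, c i * c j * Bm i j = a ⬝ᵥ c := by
      rw [(hdot Bm c c).symm, hBc, dotProduct_comm]
    have hSd : (∑ i, a i * c i) = a ⬝ᵥ c := rfl
    rw [hVq, hBq, hSd] at hQ
    rw [← hc]
    linarith
  · have h0i : Bm⁻¹ = 0 := Matrix.nonsing_inv_apply_not_isUnit _ hu
    have hc0 : c = 0 := by rw [hc, h0i, Matrix.zero_mulVec]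
    rw [h0i, Matrix.zero_mulVec, dotProduct_zero, sub_zero]
    rw [hc0] at hQ
    simp only [Pi.zero_apply, mul_zero, zero_mul, Finset.sum_const_zero, sub_zero,
      add_zero] at hQ
    rw [← hVq]
    exact hQ
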